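/- If x ∈ [0,1] is an almost fixed point of κ₂, then κ₂(x) > x. -/

import Mathlib

/-- `u` is a `p/q`-power: `u = x^n ++ y` with `x` nonempty, `y` a prefix of `x`,
`ℓ(u) = p` and `ℓ(x) = q`. -/
def IsPQPower {α : Type*} (u : List α) (p q : ℕ) : Prop :=
  0 < p ∧ 0 < q ∧ u.length = p ∧
    ∃ (x y : List α) (n : ℕ), x ≠ [] ∧ 0 < n ∧ y <+: x ∧ x.length = q ∧
      u = (List.replicate n x).flatten ++ y

/-- `u` is an `s`-power for the rational `s`. -/
def IsPowerOfExp {α : Type*} (u : List α) (s : ℚ) : Prop :=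
  ∃ p q : ℕ, IsPQPower u p q ∧ s = (p : ℚ) / q

/-- the finite word `u` occurs as a (contiguous) subword of the infinite word `w`. -/
def InfOccurs {α : Type*} (u : List α) (w : ℕ → α) : Prop :=
  ∃ i : ℕ, u = (List.range u.length).map fun k => w (i + k)

/-- the finite word `w` contains an `r`-power. -/
def ContainsPowFin {α : Type*} (w : List α) (r : ℚ) : Prop :=
  ∃ u : List α, u <:+: w ∧ ∃ s : ℚ, r ≤ s ∧ IsPowerOfExp u s

/-- the infinite word `w` contains an `r`-power. -/
def ContainsPowInf {α : Type*} (w : ℕ → α) (r : ℚ) : Prop :=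
  ∃ u : List α, InfOccurs u w ∧ ∃ s : ℚ, r ≤ s ∧ IsPowerOfExp u s

open Classical in
/-- critical exponent of a finite word. -/
noncomputable def Efin {α : Type*} (w : List α) : EReal :=
  if w = [] then 0
  else sSup {x : EReal | ∃ r : ℚ, ContainsPowFin w r ∧ x = ((r : ℝ) : EReal)}

/-- critical exponent of an infinite word. -/
noncomputable def Einf {α : Type*} (w : ℕ → α) : EReal :=
  sSup {x : EReal | ∃ r : ℚ, ContainsPowInf w r ∧ x = ((r : ℝ) : EReal)}

/-- concatenation of a finite and an infinite word. -/
def wordCat {α : Type*} (w : List α) (y : ℕ → α) : ℕ → α :=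
  fun n => if h : n < w.length then w[n] else y (n - w.length)

/-- the `k`-th digit of the base-`b` expansion of `x`, choosing for `b`-adic
rationals the expansion whose digits are ultimately `b - 1`. -/
noncomputable def baseDigit (b : ℕ) (x : ℝ) (k : ℕ) : ℕ :=
  if x ≤ 0 then 0
  else (⌈x * b ^ (k + 1)⌉ - b * ⌈x * b ^ k⌉ + ((b : ℤ) - 1)).toNat

/-- the base-`b` critical exponent function `κ_b`, with the convention `1/∞ = 0`. -/
noncomputable def kappaBase (b : ℕ) (x : ℝ) : ℝ :=
  1 / (Einf (baseDigit b x)).toReal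

/-- the `2`-critical exponent function `κ₂`. -/
noncomputable def kappa2 : ℝ → ℝ := kappaBase 2

/-- The Thue–Morse sequence. -/
def tm : ℕ → Fin 2
  | 0 => 0
  | (n + 1) => if (n + 1) % 2 = 0 then tm ((n + 1) / 2) else 1 - tm ((n + 1) / 2)
decreasing_by all_goals omega

/-- the real number whose binary expansion is the Thue–Morse sequence. -/
noncomputable def xtau : ℝ := ∑' i : ℕ, ((tm i : ℕ) : ℝ) / 2 ^ (i + 1)

/-- the left range `R⁻(f,x)`. -/
def leftRange (f : ℝ → ℝ) (x : ℝ) : Set ℝ :=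
  {α : ℝ | ∀ δ > 0, ∃ z ∈ Set.Ioo (x - δ) x, f z = α}

/-- the right range `R⁺(f,x)`. -/
def rightRange (f : ℝ → ℝ) (x : ℝ) : Set ℝ :=
  {α : ℝ | ∀ δ > 0, ∃ z ∈ Set.Ioo x (x + δ), f z = α}

private lemma ereal_one_ne_bot : (1 : EReal) ≠ ⊥ := by
  rw [show (1:EReal) = ((1:ℝ):EReal) by norm_num]
  exact EReal.coe_ne_bot 1

private lemma replicate_flatten {α : Type*} (n : ℕ) (a : α) :
    (List.replicate n [a]).flatten = List.replicate n a := by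
  induction n with
  | zero => simp
  | succ n ih => simp [List.replicate_succ, ih]

private lemma containsPow_nat {α : Type*} (w : ℕ → α) (i L : ℕ) (hL : 0 < L)
    (h : ∀ j, j < L → w (i + j) = w i) : ContainsPowInf w (L : ℚ) := by
  refine ⟨List.replicate L (w i), ⟨i, ?_⟩, (L:ℚ), le_refl _, L, 1, ?_, by simp⟩
  · refine (List.ext_getElem (by simp) ?_).symm
    intro j h1 h2
    simp only [List.getElem_map, List.getElem_range, List.getElem_replicate]
    exact h j (by simpa using h1)
  · exact ⟨hL, one_pos, by simp, [w i], [], L, by simp, hL, List.nil_prefix,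
      by simp, by simp [replicate_flatten]⟩

private lemma containsPow_one {α : Type*} (w : ℕ → α) : ContainsPowInf w 1 := by
  have := containsPow_nat w 0 1 one_pos (by intro j hj; interval_cases j; rfl)
  simpa using this

private lemma einf_ge_one {α : Type*} (w : ℕ → α) : 1 ≤ Einf w := by
  have h : ((1:ℝ) : EReal) ∈ {x : EReal | ∃ r : ℚ, ContainsPowInf w r ∧ x = ((r : ℝ) : EReal)} :=
    ⟨1, containsPow_one w, by norm_num⟩
  have := le_sSup h
  rw [Einf]
  simpa using this

private lemma einf_toReal_nonneg {α : Type*} (w : ℕ → α) : 0 ≤ (Einf w).toReal := by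
  rcases eq_or_ne (Einf w) ⊤ with h | h
  · simp [h]
  · have h1 : (1:EReal) ≤ Einf w := einf_ge_one w
    have hb : Einf w ≠ ⊥ := ne_of_gt (lt_of_lt_of_le (bot_lt_iff_ne_bot.mpr ereal_one_ne_bot) h1)
    have := EReal.toReal_le_toReal h1 ereal_one_ne_bot h
    simp at this; linarith

private lemma exists_rat_lt_einf {α : Type*} (w : ℕ → α) (c : ℝ) (h : (c : EReal) < Einf w) :
    ∃ r : ℚ, ContainsPowInf w r ∧ c < (r : ℝ) := by
  rw [Einf, lt_sSup_iff] at h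
  obtain ⟨y, ⟨r, hr, rfl⟩, hy⟩ := h
  exact ⟨r, hr, by exact_mod_cast hy⟩

private lemma einf_top_of_zero_tail (w : ℕ → ℕ) (n : ℕ) (h : ∀ k, n ≤ k → w k = 0) :
    Einf w = ⊤ := by
  rw [Einf, sSup_eq_top]
  intro b hb
  obtain ⟨L, hL1, hL2⟩ : ∃ L : ℕ, 0 < L ∧ b < ((L : ℝ) : EReal) := by
    rcases eq_or_ne b ⊥ with rfl | hbb
    · exact ⟨1, one_pos, bot_lt_iff_ne_bot.mpr (EReal.coe_ne_bot _)⟩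
    · obtain ⟨L0, hL0⟩ := exists_nat_gt b.toReal
      refine ⟨L0 + 1, Nat.succ_pos _, ?_⟩
      rw [← EReal.coe_toReal hb.ne hbb]
      have : b.toReal < ((L0:ℝ) + 1) := by linarith
      exact_mod_cast EReal.coe_lt_coe_iff.mpr (by push_cast; linarith : b.toReal < ((L0+1:ℕ):ℝ))
  refine ⟨(((L:ℚ):ℝ) : EReal), ⟨L, ?_, rfl⟩, by push_cast; exact hL2⟩
  have := containsPow_nat w n L hL1 (by intro j hj; rw [h (n+j) (by omega), h n le_rfl])
  exact this

private lemma kappa2_nonneg (z : ℝ) : 0 ≤ kappa2 z :=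
  one_div_nonneg.mpr (einf_toReal_nonneg _)

private lemma kappa_le_of_contains (z : ℝ) (r : ℚ) (hr : 0 < (r:ℝ))
    (h : ContainsPowInf (baseDigit 2 z) r) : kappa2 z ≤ 1 / (r : ℝ) := by
  have hE : (((r:ℝ)) : EReal) ≤ Einf (baseDigit 2 z) :=
    le_sSup ⟨r, h, rfl⟩
  rw [kappa2, kappaBase]
  rcases eq_or_ne (Einf (baseDigit 2 z)) ⊤ with htop | htop
  · rw [htop]
    simp only [EReal.toReal_top]
    rw [div_zero]
    positivity
  · have h2 : (r:ℝ) ≤ (Einf (baseDigit 2 z)).toReal := by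
      have := EReal.toReal_le_toReal hE (EReal.coe_ne_bot _) htop
      simpa using this
    exact one_div_le_one_div_of_le hr h2

private lemma bound_of_stable (w : ℕ → ℕ) (I : ℝ → Set ℝ)
    (hdig : ∀ N, ∃ δ > 0, ∀ z ∈ I δ, ∀ k < N, baseDigit 2 z k = w k)
    (α : ℝ) (hα : ∀ δ > 0, ∃ z ∈ I δ, kappa2 z = α) :
    α ≤ 1 / (Einf w).toReal := by
  by_contra hcon
  push_neg at hcon
  have hα0 : 0 < α := lt_of_le_of_lt (one_div_nonneg.mpr (einf_toReal_nonneg w)) hcon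
  have hE : ((1/α : ℝ) : EReal) < Einf w := by
    rcases eq_or_ne (Einf w) ⊤ with htop | htop
    · rw [htop]; exact EReal.coe_lt_top _
    · have hb : Einf w ≠ ⊥ :=
        ne_of_gt (lt_of_lt_of_le (bot_lt_iff_ne_bot.mpr ereal_one_ne_bot) (einf_ge_one w))
      have ht1 : (1:ℝ) ≤ (Einf w).toReal := by
        have := EReal.toReal_le_toReal (einf_ge_one w) ereal_one_ne_bot htop
        simpa using this
      have ht0 : 0 < (Einf w).toReal := by linarith
      have h2 : 1/α < (Einf w).toReal := by
        rw [div_lt_iff₀ hα0]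
        rw [div_lt_iff₀ ht0] at hcon
        linarith
      calc ((1/α : ℝ) : EReal) < (((Einf w).toReal : ℝ) : EReal) := EReal.coe_lt_coe_iff.mpr h2
        _ = Einf w := EReal.coe_toReal htop hb
  obtain ⟨r, hrw, hr⟩ := exists_rat_lt_einf w (1/α) hE
  have hr0 : 0 < (r:ℝ) := lt_trans (by positivity) hr
  obtain ⟨u, ⟨i, hu⟩, s, hs, hpow⟩ := hrw
  obtain ⟨δ, hδ, hdz⟩ := hdig (i + u.length)
  obtain ⟨z, hz, hzα⟩ := hα δ hδ
  have hocc : InfOccurs u (baseDigit 2 z) := by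
    refine ⟨i, ?_⟩
    conv_lhs => rw [hu]
    refine List.map_congr_left ?_
    intro k hk
    exact (hdz z hz (i + k) (by have := List.mem_range.mp hk; omega)).symm
  have hle := kappa_le_of_contains z r hr0 ⟨u, hocc, s, hs, hpow⟩
  rw [hzα] at hle
  have : (1:ℝ)/(r:ℝ) < α := by
    rw [div_lt_iff₀ hr0]
    rw [div_lt_iff₀ hα0] at hr
    linarith
  linarith

private lemma ceil_stable_left_one (x c : ℝ) (hc : 0 < c) :
    ∃ δ > 0, ∀ z ∈ Set.Ioo (x - δ) x, ⌈z * c⌉ = ⌈x * c⌉ := by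
  refine ⟨(x*c - (⌈x*c⌉ - 1))/c, div_pos (by have := Int.ceil_lt_add_one (x*c); linarith) hc, ?_⟩
  intro z hz
  rw [Int.ceil_eq_iff]
  have h1 : (x - (x*c - (⌈x*c⌉ - 1))/c) * c = (⌈x*c⌉:ℝ) - 1 := by field_simp; ring
  have h2 : z * c < x * c := mul_lt_mul_of_pos_right hz.2 hc
  constructor
  · calc (⌈x*c⌉:ℝ) - 1 = (x - (x*c - (⌈x*c⌉ - 1))/c) * c := h1.symm
      _ < z * c := mul_lt_mul_of_pos_right hz.1 hc
  · exact le_trans h2.le (Int.le_ceil _)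

private lemma ceil_stable_right_one (x c : ℝ) (hc : 0 < c) :
    ∃ δ > 0, ∀ z ∈ Set.Ioo x (x + δ), ⌈z * c⌉ = ⌊x * c⌋ + 1 := by
  refine ⟨((⌊x*c⌋ + 1) - x*c)/c, div_pos (by have := Int.lt_floor_add_one (x*c); linarith) hc, ?_⟩
  intro z hz
  rw [Int.ceil_eq_iff]
  have h1 : (x + ((⌊x*c⌋ + 1) - x*c)/c) * c = (⌊x*c⌋:ℝ) + 1 := by field_simp; ring
  have h2 : x * c < z * c := mul_lt_mul_of_pos_right hz.1 hc
  constructor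
  · push_cast
    have := Int.floor_le (x*c)
    linarith
  · push_cast
    have : z * c < (x + ((⌊x*c⌋ + 1) - x*c)/c) * c := mul_lt_mul_of_pos_right hz.2 hc
    rw [h1] at this
    push_cast at this
    linarith

private lemma combine_left (x : ℝ) (P : ℕ → ℝ → Prop)
    (h : ∀ k, ∃ δ > 0, ∀ z ∈ Set.Ioo (x - δ) x, P k z) (N : ℕ) :
    ∃ δ > 0, ∀ z ∈ Set.Ioo (x - δ) x, ∀ k < N, P k z := by
  induction N with
  | zero => exact ⟨1, one_pos, fun z _ k hk => absurd hk (Nat.not_lt_zero k)⟩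
  | succ N ih =>
    obtain ⟨δ₁, hδ₁, h₁⟩ := ih
    obtain ⟨δ₂, hδ₂, h₂⟩ := h N
    refine ⟨min δ₁ δ₂, lt_min hδ₁ hδ₂, fun z hz k hk => ?_⟩
    have hz₁ : z ∈ Set.Ioo (x - δ₁) x :=
      ⟨lt_of_le_of_lt (by have := min_le_left δ₁ δ₂; linarith) hz.1, hz.2⟩
    have hz₂ : z ∈ Set.Ioo (x - δ₂) x :=
      ⟨lt_of_le_of_lt (by have := min_le_right δ₁ δ₂; linarith) hz.1, hz.2⟩
    rcases Nat.lt_succ_iff_lt_or_eq.mp hk with hk' | rfl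
    · exact h₁ z hz₁ k hk'
    · exact h₂ z hz₂

private lemma combine_right (x : ℝ) (P : ℕ → ℝ → Prop)
    (h : ∀ k, ∃ δ > 0, ∀ z ∈ Set.Ioo x (x + δ), P k z) (N : ℕ) :
    ∃ δ > 0, ∀ z ∈ Set.Ioo x (x + δ), ∀ k < N, P k z := by
  induction N with
  | zero => exact ⟨1, one_pos, fun z _ k hk => absurd hk (Nat.not_lt_zero k)⟩
  | succ N ih =>
    obtain ⟨δ₁, hδ₁, h₁⟩ := ih
    obtain ⟨δ₂, hδ₂, h₂⟩ := h N
    refine ⟨min δ₁ δ₂, lt_min hδ₁ hδ₂, fun z hz k hk => ?_⟩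
    have hz₁ : z ∈ Set.Ioo x (x + δ₁) :=
      ⟨hz.1, lt_of_lt_of_le hz.2 (by have := min_le_left δ₁ δ₂; linarith)⟩
    have hz₂ : z ∈ Set.Ioo x (x + δ₂) :=
      ⟨hz.1, lt_of_lt_of_le hz.2 (by have := min_le_right δ₁ δ₂; linarith)⟩
    rcases Nat.lt_succ_iff_lt_or_eq.mp hk with hk' | rfl
    · exact h₁ z hz₁ k hk'
    · exact h₂ z hz₂

private lemma digits_stable_left (x : ℝ) (hx : 0 < x) (N : ℕ) :
    ∃ δ > 0, ∀ z ∈ Set.Ioo (x - δ) x, ∀ k < N, baseDigit 2 z k = baseDigit 2 x k := by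
  refine combine_left x (fun k z => baseDigit 2 z k = baseDigit 2 x k) ?_ N
  intro k
  obtain ⟨δ₁, h1, H1⟩ := ceil_stable_left_one x (((2:ℕ):ℝ)^k) (by positivity)
  obtain ⟨δ₂, h2, H2⟩ := ceil_stable_left_one x (((2:ℕ):ℝ)^(k+1)) (by positivity)
  refine ⟨min x (min δ₁ δ₂), by positivity, fun z hz => ?_⟩
  have hz0 : 0 < z := by
    have h3 := hz.1
    have : x - min x (min δ₁ δ₂) ≥ 0 := by
      have := min_le_left x (min δ₁ δ₂); linarith
    linarith
  have hz₁ : z ∈ Set.Ioo (x - δ₁) x :=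
    ⟨lt_of_le_of_lt (by have := le_trans (min_le_right x _) (min_le_left δ₁ δ₂); linarith) hz.1, hz.2⟩
  have hz₂ : z ∈ Set.Ioo (x - δ₂) x :=
    ⟨lt_of_le_of_lt (by have := le_trans (min_le_right x _) (min_le_right δ₁ δ₂); linarith) hz.1, hz.2⟩
  simp only [baseDigit, if_neg (not_le.mpr hz0), if_neg (not_le.mpr hx)]
  rw [H1 z hz₁, H2 z hz₂]

/-- the right-limit digit word at `x`. -/
private noncomputable def wRdig (x : ℝ) (k : ℕ) : ℕ :=
  (⌊x * ((2:ℕ):ℝ) ^ (k+1)⌋ - 2 * ⌊x * ((2:ℕ):ℝ) ^ k⌋).toNat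

private lemma digits_stable_right (x : ℝ) (hx : 0 < x) (N : ℕ) :
    ∃ δ > 0, ∀ z ∈ Set.Ioo x (x + δ), ∀ k < N, baseDigit 2 z k = wRdig x k := by
  refine combine_right x (fun k z => baseDigit 2 z k = wRdig x k) ?_ N
  intro k
  obtain ⟨δ₁, h1, H1⟩ := ceil_stable_right_one x (((2:ℕ):ℝ)^k) (by positivity)
  obtain ⟨δ₂, h2, H2⟩ := ceil_stable_right_one x (((2:ℕ):ℝ)^(k+1)) (by positivity)
  refine ⟨min δ₁ δ₂, lt_min h1 h2, fun z hz => ?_⟩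
  have hz0 : 0 < z := lt_trans hx hz.1
  have hz₁ : z ∈ Set.Ioo x (x + δ₁) :=
    ⟨hz.1, lt_of_lt_of_le hz.2 (by have := min_le_left δ₁ δ₂; linarith)⟩
  have hz₂ : z ∈ Set.Ioo x (x + δ₂) :=
    ⟨hz.1, lt_of_lt_of_le hz.2 (by have := min_le_right δ₁ δ₂; linarith)⟩
  simp only [baseDigit, if_neg (not_le.mpr hz0)]
  rw [H1 z hz₁, H2 z hz₂, wRdig]
  congr 1
  push_cast
  ring

private lemma wR_bound (x : ℝ) (hx : 0 < x) :
    1 / (Einf (wRdig x)).toReal ≤ kappa2 x := by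
  by_cases hP : ∃ n : ℕ, ∃ m : ℤ, x * ((2:ℕ):ℝ)^n = (m:ℝ)
  · obtain ⟨n, m, hm⟩ := hP
    have htail : ∀ k, n ≤ k → wRdig x k = 0 := by
      intro k hk
      obtain ⟨j, rfl⟩ := Nat.exists_eq_add_of_le hk
      have hfl : ∀ i : ℕ, ⌊x * ((2:ℕ):ℝ)^(n + i)⌋ = m * 2^i := by
        intro i
        have : x * ((2:ℕ):ℝ)^(n + i) = ((m * 2^i : ℤ) : ℝ) := by
          rw [pow_add, ← mul_assoc, hm]; push_cast; ring
        rw [this, Int.floor_intCast]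
      rw [wRdig, show n + j + 1 = n + (j+1) from rfl, hfl (j+1), hfl j]
      simp [pow_succ]; ring_nf
      omega
    rw [einf_top_of_zero_tail _ n htail]
    simpa using kappa2_nonneg x
  · push_neg at hP
    have hd : baseDigit 2 x = wRdig x := by
      funext k
      have hceil : ∀ i : ℕ, ⌈x * ((2:ℕ):ℝ)^i⌉ = ⌊x * ((2:ℕ):ℝ)^i⌋ + 1 := by
        intro i
        have hne : (⌊x * ((2:ℕ):ℝ)^i⌋ : ℝ) ≠ x * ((2:ℕ):ℝ)^i := fun hc => hP i ⌊x * ((2:ℕ):ℝ)^i⌋ hc.symm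
        have h1 : (⌊x * ((2:ℕ):ℝ)^i⌋ : ℝ) < x * ((2:ℕ):ℝ)^i :=
          lt_of_le_of_ne (Int.floor_le _) hne
        rw [Int.ceil_eq_iff]
        have h2 := Int.lt_floor_add_one (x * ((2:ℕ):ℝ)^i)
        constructor
        · push_cast at h1 ⊢; linarith
        · push_cast at h2 ⊢; linarith
      simp only [baseDigit, if_neg (not_le.mpr hx), wRdig, hceil k, hceil (k+1)]
      congr 1
      push_cast
      ring
    rw [kappa2, kappaBase, hd]

theorem stmt_11 (x : ℝ) (hx : x ∈ Set.Icc (0 : ℝ) 1)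
    (h : x ∈ interior (leftRange kappa2 x) ∪ interior (rightRange kappa2 x)) :
    x < kappa2 x := by
  rcases h with hL | hR
  · have hsub0 : leftRange kappa2 x ⊆ Set.Ici 0 := by
      intro α hα
      obtain ⟨z, _, hz⟩ := hα 1 one_pos
      exact hz ▸ kappa2_nonneg z
    have hx0 : 0 < x := by
      have := interior_mono hsub0 hL
      rwa [interior_Ici] at this
    have hsub : leftRange kappa2 x ⊆ Set.Icc 0 (1 / (Einf (baseDigit 2 x)).toReal) := by
      intro α hα
      exact ⟨hsub0 hα, bound_of_stable (baseDigit 2 x) (fun δ => Set.Ioo (x - δ) x)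
        (digits_stable_left x hx0) α hα⟩
    have hmem := interior_mono hsub hL
    rw [interior_Icc] at hmem
    have : kappa2 x = 1 / (Einf (baseDigit 2 x)).toReal := by rw [kappa2, kappaBase]
    rw [this]
    exact hmem.2
  · have hsub0 : rightRange kappa2 x ⊆ Set.Ici 0 := by
      intro α hα
      obtain ⟨z, _, hz⟩ := hα 1 one_pos
      exact hz ▸ kappa2_nonneg z
    have hx0 : 0 < x := by
      have := interior_mono hsub0 hR
      rwa [interior_Ici] at this
    have hsub : rightRange kappa2 x ⊆ Set.Icc 0 (1 / (Einf (wRdig x)).toReal) := by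
      intro α hα
      exact ⟨hsub0 hα, bound_of_stable (wRdig x) (fun δ => Set.Ioo x (x + δ))
        (digits_stable_right x hx0) α hα⟩
    have hmem := interior_mono hsub hR
    rw [interior_Icc] at hmem
    exact lt_of_lt_of_le hmem.2 (wR_bound x hx0)
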